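/- A family P of self-adjoint operators is a perturbation of A ∈ 𝒞 if and only if (a) the range of P i is contained in the range of A i for every i ∈ I, and (b) L(P) = 0. -/

import Mathlib

open ContinuousLinearMap

/-- The linear map `L(A) = (1/|G|) · Σ_{i ∈ I} Σ_{g ∈ G} (U g) ∘ (A i) ∘ (U g)†`
associated to a family of operators `A : I → (H →L[ℂ] H)`. -/
noncomputable def Lmap {H : Type*} [NormedAddCommGroup H] [InnerProductSpace ℂ H]
    [FiniteDimensional ℂ H] {G : Type*} [Group G] [Fintype G] {I : Type*} [Fintype I]
    (U : G → (H →L[ℂ] H)) (A : I → (H →L[ℂ] H)) : H →L[ℂ] H :=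
  (Fintype.card G : ℂ)⁻¹ •
    ∑ i : I, ∑ g : G, U g ∘L A i ∘L ContinuousLinearMap.adjoint (U g)

/-- The convex set `𝒞` of block operators corresponding to covariant POVMs with
outcome space `I × G`: families `A` with every `A i` positive semidefinite and `L(A) = 1`. -/
def covSet {H : Type*} [NormedAddCommGroup H] [InnerProductSpace ℂ H]
    [FiniteDimensional ℂ H] {G : Type*} [Group G] [Fintype G] {I : Type*} [Fintype I]
    (U : G → (H →L[ℂ] H)) : Set (I → (H →L[ℂ] H)) :=
  {A | (∀ i, (A i).IsPositive) ∧ Lmap U A = 1}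

section Helpers

variable {H : Type*} [NormedAddCommGroup H] [InnerProductSpace ℂ H] [FiniteDimensional ℂ H]

local notation "⟪" x ", " y "⟫" => @inner ℂ _ _ x y

lemma real_smul_eq_complex_smul (t : ℝ) (x : H) : t • x = ((t : ℂ)) • x := by
  rw [← algebraMap_smul ℂ t x, Complex.coe_algebraMap]

lemma inner_real_smul_left' (t : ℝ) (x y : H) : ⟪t • x, y⟫ = (t : ℂ) * ⟪x, y⟫ := by
  rw [real_smul_eq_complex_smul, inner_smul_left, Complex.conj_ofReal]

lemma inner_real_smul_right' (t : ℝ) (x y : H) : ⟪x, t • y⟫ = (t : ℂ) * ⟪x, y⟫ := by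
  rw [real_smul_eq_complex_smul, inner_smul_right]

lemma selfAdjoint_inner_symm {B : H →L[ℂ] H} (hB : IsSelfAdjoint B) (x y : H) :
    ⟪B x, y⟫ = ⟪x, B y⟫ := by
  conv_lhs => rw [← hB.adjoint_eq]
  exact ContinuousLinearMap.adjoint_inner_left B y x

/-- Cauchy–Schwarz for the semi-inner product associated to a positive operator. -/
lemma isPositive_re_inner_sq_le {B : H →L[ℂ] H} (hB : B.IsPositive) (x y : H) :
    (Complex.re ⟪B x, y⟫) ^ 2 ≤ Complex.re ⟪B x, x⟫ * Complex.re ⟪B y, y⟫ := by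
  have hsym : ∀ u v : H, ⟪B u, v⟫ = ⟪u, B v⟫ := selfAdjoint_inner_symm hB.isSelfAdjoint
  have key : ∀ t : ℝ, 0 ≤ Complex.re ⟪B y, y⟫ * (t * t) +
      (2 * Complex.re ⟪B x, y⟫) * t + Complex.re ⟪B x, x⟫ := by
    intro t
    have h0 := hB.2 (x + (t : ℂ) • y)
    rw [ContinuousLinearMap.reApplyInnerSelf_apply, RCLike.re_to_complex] at h0
    have h1 : Complex.re ⟪B y, x⟫ = Complex.re ⟪B x, y⟫ := by
      rw [hsym y x]
      exact inner_re_symm (𝕜 := ℂ) y (B x)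
    rw [map_add, map_smul, inner_add_left, inner_add_right, inner_add_right,
      inner_smul_left, inner_smul_right, inner_smul_left, inner_smul_right] at h0
    simp only [Complex.add_re, Complex.mul_re, Complex.conj_re, Complex.conj_im,
      Complex.ofReal_re, Complex.ofReal_im] at h0
    rw [h1] at h0
    nlinarith [h0]
  have hd := discrim_le_zero key
  rw [discrim] at hd
  nlinarith [hd]

lemma isPositive_apply_eq_zero {B : H →L[ℂ] H} (hB : B.IsPositive) {x : H}
    (hx : Complex.re ⟪B x, x⟫ = 0) : B x = 0 := by
  have h := isPositive_re_inner_sq_le hB x (B x)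
  rw [hx, zero_mul] at h
  have h2 : Complex.re ⟪B x, B x⟫ = ‖B x‖ ^ 2 := by
    rw [← RCLike.re_to_complex, inner_self_eq_norm_sq]
  rw [h2] at h
  have h4 : ‖B x‖ ^ 2 ≤ 0 := by nlinarith [h]
  have h5 : ‖B x‖ ^ 2 = 0 := le_antisymm h4 (sq_nonneg _)
  have h3 : ‖B x‖ = 0 := pow_eq_zero_iff two_ne_zero |>.mp h5
  simpa [norm_eq_zero] using h3

/-- For a self-adjoint operator, the orthogonal complement of the range is the kernel. -/
lemma orthogonal_range_eq_ker {T : H →L[ℂ] H} (hT : IsSelfAdjoint T) :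
    (LinearMap.range (T : H →ₗ[ℂ] H))ᗮ = LinearMap.ker (T : H →ₗ[ℂ] H) := by
  ext x
  rw [Submodule.mem_orthogonal, LinearMap.mem_ker, ContinuousLinearMap.coe_coe]
  constructor
  · intro h
    have h1 : ⟪T x, T x⟫ = 0 := by
      rw [selfAdjoint_inner_symm hT, ← inner_conj_symm]
      rw [h (T (T x)) (LinearMap.mem_range_self _ _)]
      simp
    exact inner_self_eq_zero.mp h1
  · rintro h u ⟨z, rfl⟩
    show ⟪T z, x⟫ = 0
    rw [selfAdjoint_inner_symm hT, h, inner_zero_right]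

lemma range_le_range_of_ker_le_ker {S T : H →L[ℂ] H} (hS : IsSelfAdjoint S)
    (hT : IsSelfAdjoint T) (h : LinearMap.ker (S : H →ₗ[ℂ] H) ≤ LinearMap.ker (T : H →ₗ[ℂ] H)) :
    LinearMap.range (T : H →ₗ[ℂ] H) ≤ LinearMap.range (S : H →ₗ[ℂ] H) := by
  have hT' : (LinearMap.range (T : H →ₗ[ℂ] H) : Submodule ℂ H) = (LinearMap.ker (T : H →ₗ[ℂ] H))ᗮ := by
    rw [← orthogonal_range_eq_ker hT, Submodule.orthogonal_orthogonal]
  have hS' : (LinearMap.range (S : H →ₗ[ℂ] H) : Submodule ℂ H) = (LinearMap.ker (S : H →ₗ[ℂ] H))ᗮ := by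
    rw [← orthogonal_range_eq_ker hS, Submodule.orthogonal_orthogonal]
  rw [hT', hS']
  exact Submodule.orthogonal_le h

lemma ker_le_ker_of_range_le_range {S T : H →L[ℂ] H} (hS : IsSelfAdjoint S)
    (hT : IsSelfAdjoint T) (h : LinearMap.range (T : H →ₗ[ℂ] H) ≤ LinearMap.range (S : H →ₗ[ℂ] H)) :
    LinearMap.ker (S : H →ₗ[ℂ] H) ≤ LinearMap.ker (T : H →ₗ[ℂ] H) := by
  rw [← orthogonal_range_eq_ker hS, ← orthogonal_range_eq_ker hT]
  exact Submodule.orthogonal_le h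

/-- Positive definiteness of a positive operator on its range, quantitatively. -/
lemma exists_coercivity {A : H →L[ℂ] H} (hA : A.IsPositive) :
    ∃ c > (0 : ℝ), ∀ v ∈ LinearMap.range (A : H →ₗ[ℂ] H), c * ‖v‖ ^ 2 ≤ Complex.re ⟪A v, v⟫ := by
  set V : Submodule ℂ H := LinearMap.range (A : H →ₗ[ℂ] H) with hVdef
  by_cases hV : V = ⊥
  · refine ⟨1, one_pos, ?_⟩
    intro v hv
    rw [hV, Submodule.mem_bot] at hv
    simp [hv]
  · haveI : Nontrivial V := Submodule.nontrivial_iff_ne_bot.mpr hV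
    have hsph : (Metric.sphere (0 : V) 1).Nonempty :=
      NormedSpace.sphere_nonempty.mpr zero_le_one
    have hcomp : IsCompact (Metric.sphere (0 : V) 1) := isCompact_sphere 0 1
    have hcont : ContinuousOn (fun v : V => Complex.re ⟪A (v : H), (v : H)⟫)
        (Metric.sphere (0 : V) 1) := by
      have hcf : Continuous fun v : V => (⟪A (v : H), (v : H)⟫ : ℂ) :=
        Continuous.inner (A.continuous.comp continuous_subtype_val) continuous_subtype_val
      exact (Complex.continuous_re.comp hcf).continuousOn
    obtain ⟨v0, hv0mem, hv0min⟩ := hcomp.exists_isMinOn hsph hcont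
    set c : ℝ := Complex.re ⟪A (v0 : H), (v0 : H)⟫ with hcdef
    have hv0norm : ‖(v0 : H)‖ = 1 := by
      simpa using mem_sphere_zero_iff_norm.mp hv0mem
    have hc0 : 0 < c := by
      have hge : 0 ≤ c := by
        have := hA.2 (v0 : H)
        rwa [ContinuousLinearMap.reApplyInnerSelf_apply, RCLike.re_to_complex] at this
      rcases hge.lt_or_eq with h | h
      · exact h
      · exfalso
        have hAA : A (v0 : H) = 0 := isPositive_apply_eq_zero hA h.symm
        have hv0V : (v0 : H) ∈ V := v0.2
        obtain ⟨w, hw⟩ := hv0V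
        rw [ContinuousLinearMap.coe_coe] at hw
        have h1 : ⟪(v0 : H), (v0 : H)⟫ = 0 := by
          rw [← hw, selfAdjoint_inner_symm hA.isSelfAdjoint, hw, hAA, inner_zero_right]
        have h2 : (v0 : H) = 0 := inner_self_eq_zero.mp h1
        rw [h2, norm_zero] at hv0norm
        exact zero_ne_one hv0norm
    refine ⟨c, hc0, ?_⟩
    intro v hv
    rcases eq_or_ne v 0 with rfl | hvne
    · simp
    · have hnv : (0 : ℝ) < ‖v‖ := norm_pos_iff.mpr hvne
      set u : V := ⟨(‖v‖⁻¹ : ℝ) • v, Submodule.smul_of_tower_mem V _ hv⟩ with hudef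
      have humem : u ∈ Metric.sphere (0 : V) 1 := by
        rw [mem_sphere_zero_iff_norm]
        show ‖(‖v‖⁻¹ : ℝ) • v‖ = 1
        rw [norm_smul, norm_inv, norm_norm]
        field_simp
      have hle := hv0min humem
      have hexp : Complex.re ⟪A ((u : H)), (u : H)⟫
          = ‖v‖⁻¹ * ‖v‖⁻¹ * Complex.re ⟪A v, v⟫ := by
        show Complex.re ⟪A ((‖v‖⁻¹ : ℝ) • v), (‖v‖⁻¹ : ℝ) • v⟫ = _
        rw [map_smul_of_tower, inner_real_smul_left', inner_real_smul_right']
        simp [Complex.mul_re, mul_assoc]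
      have hc2 : c ≤ ‖v‖⁻¹ * ‖v‖⁻¹ * Complex.re ⟪A v, v⟫ := by
        have h9 : c ≤ Complex.re ⟪A ((u : H)), (u : H)⟫ := hle
        rwa [hexp] at h9
      have h2 : c * ‖v‖ ^ 2 ≤ ‖v‖⁻¹ * ‖v‖⁻¹ * Complex.re ⟪A v, v⟫ * ‖v‖ ^ 2 := by
        nlinarith [sq_nonneg ‖v‖]
      calc c * ‖v‖ ^ 2 ≤ ‖v‖⁻¹ * ‖v‖⁻¹ * Complex.re ⟪A v, v⟫ * ‖v‖ ^ 2 := h2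
        _ = Complex.re ⟪A v, v⟫ := by
            have hne : ‖v‖ ≠ 0 := ne_of_gt hnv
            field_simp [sq]

/-- The key existence of a positivity margin. -/
lemma exists_eps_isPositive {A P : H →L[ℂ] H} (hA : A.IsPositive) (hP : IsSelfAdjoint P)
    (hr : LinearMap.range (P : H →ₗ[ℂ] H) ≤ LinearMap.range (A : H →ₗ[ℂ] H)) :
    ∃ ε > (0 : ℝ), ∀ t : ℝ, |t| ≤ ε → (A + t • P).IsPositive := by
  obtain ⟨c, hc, hcoer⟩ := exists_coercivity hA
  have hker : LinearMap.ker (A : H →ₗ[ℂ] H) ≤ LinearMap.ker (P : H →ₗ[ℂ] H) :=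
    ker_le_ker_of_range_le_range hA.isSelfAdjoint hP hr
  set V : Submodule ℂ H := LinearMap.range (A : H →ₗ[ℂ] H) with hVdef
  refine ⟨c / (‖P‖ + 1), by positivity, ?_⟩
  intro t ht
  have hsa : IsSelfAdjoint (A + t • P) := by
    have h1 : IsSelfAdjoint (t • P) := by
      rw [IsSelfAdjoint, star_smul, star_trivial, hP.star_eq]
    exact hA.isSelfAdjoint.add h1
  refine ⟨ContinuousLinearMap.isSelfAdjoint_iff_isSymmetric.mp hsa, ?_⟩
  intro x
  rw [ContinuousLinearMap.reApplyInnerSelf_apply, RCLike.re_to_complex]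
  -- decompose x = v + w with v ∈ V, w ∈ Vᗮ
  set v : H := V.starProjection x with hvdef
  have hvV : v ∈ V := V.starProjection_apply_mem x
  have hwmem : x - v ∈ Vᗮ := V.sub_starProjection_mem_orthogonal x
  set w : H := x - v with hwdef
  have hxvw : x = v + w := by rw [hwdef]; abel
  have hAw : A w = 0 := by
    have h1 : w ∈ LinearMap.ker (A : H →ₗ[ℂ] H) := by
      rw [← orthogonal_range_eq_ker hA.isSelfAdjoint]
      exact hwmem
    exact h1
  have hPw : P w = 0 := hker (by simpa [LinearMap.mem_ker] using hAw)
  have happ : (A + t • P) x = A v + t • P v := by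
    rw [hxvw, map_add]
    simp [ContinuousLinearMap.add_apply, ContinuousLinearMap.smul_apply, hAw, hPw]
  have hmemV : A v + t • P v ∈ V := by
    apply Submodule.add_mem
    · exact LinearMap.mem_range_self _ _
    · exact Submodule.smul_of_tower_mem V t (hr (LinearMap.mem_range_self _ _))
  have hinner : ⟪(A + t • P) x, x⟫ = ⟪A v, v⟫ + (t : ℂ) * ⟪P v, v⟫ := by
    rw [happ]
    conv_lhs => rw [hxvw]
    rw [inner_add_right]
    have hzero : ⟪A v + t • P v, w⟫ = 0 := hwmem _ hmemV
    rw [hzero, add_zero, inner_add_left, inner_real_smul_left']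
  rw [hinner]
  simp only [Complex.add_re, Complex.mul_re, Complex.ofReal_re, Complex.ofReal_im, zero_mul,
    sub_zero]
  -- bound the perturbation term
  have hb1 : c * ‖v‖ ^ 2 ≤ Complex.re ⟪A v, v⟫ := hcoer v hvV
  have hb2 : |Complex.re ⟪P v, v⟫| ≤ ‖P‖ * ‖v‖ ^ 2 := by
    calc |Complex.re ⟪P v, v⟫| ≤ ‖⟪P v, v⟫‖ := Complex.abs_re_le_norm _
      _ ≤ ‖P v‖ * ‖v‖ := by
          exact norm_inner_le_norm _ _
      _ ≤ ‖P‖ * ‖v‖ * ‖v‖ := by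
          have := P.le_opNorm v
          nlinarith [norm_nonneg v]
      _ = ‖P‖ * ‖v‖ ^ 2 := by ring
  have hP0 : (0 : ℝ) ≤ ‖P‖ := norm_nonneg P
  have htP : |t| * ‖P‖ ≤ c := by
    have h1 : |t| * (‖P‖ + 1) ≤ c := by
      have h2 := mul_le_mul_of_nonneg_right ht (by positivity : (0:ℝ) ≤ ‖P‖ + 1)
      calc |t| * (‖P‖ + 1) ≤ c / (‖P‖ + 1) * (‖P‖ + 1) := h2
        _ = c := div_mul_cancel₀ c (by positivity)
    nlinarith [abs_nonneg t]
  have habs : |t * Complex.re ⟪P v, v⟫| ≤ c * ‖v‖ ^ 2 := by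
    rw [abs_mul]
    calc |t| * |Complex.re ⟪P v, v⟫| ≤ |t| * (‖P‖ * ‖v‖ ^ 2) :=
          mul_le_mul_of_nonneg_left hb2 (abs_nonneg t)
      _ = |t| * ‖P‖ * ‖v‖ ^ 2 := by ring
      _ ≤ c * ‖v‖ ^ 2 := by nlinarith [sq_nonneg ‖v‖]
  nlinarith [abs_le.mp habs]

/-- From two-sided positivity, the range inclusion. -/
lemma range_le_of_isPositive_pair {A P : H →L[ℂ] H} (hA : A.IsPositive)
    (hP : IsSelfAdjoint P) {ε : ℝ} (hε : 0 < ε)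
    (hp : (A + ε • P).IsPositive) (hm : (A + (-ε) • P).IsPositive) :
    LinearMap.range (P : H →ₗ[ℂ] H) ≤ LinearMap.range (A : H →ₗ[ℂ] H) := by
  have hker : LinearMap.ker (A : H →ₗ[ℂ] H) ≤ LinearMap.ker (P : H →ₗ[ℂ] H) := by
    intro x hx
    rw [LinearMap.mem_ker, ContinuousLinearMap.coe_coe] at hx ⊢
    have hxp : Complex.re ⟪(A + ε • P) x, x⟫ = ε * Complex.re ⟪P x, x⟫ := by
      rw [ContinuousLinearMap.add_apply, ContinuousLinearMap.smul_apply, hx, zero_add,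
        inner_real_smul_left']
      simp [Complex.mul_re]
    have hxm : Complex.re ⟪(A + (-ε) • P) x, x⟫ = -(ε * Complex.re ⟪P x, x⟫) := by
      rw [ContinuousLinearMap.add_apply, ContinuousLinearMap.smul_apply, hx, zero_add,
        inner_real_smul_left']
      simp [Complex.mul_re]
    have h1 : 0 ≤ ε * Complex.re ⟪P x, x⟫ := by
      have := hp.2 x
      rwa [ContinuousLinearMap.reApplyInnerSelf_apply, RCLike.re_to_complex, hxp] at this
    have h2 : 0 ≤ -(ε * Complex.re ⟪P x, x⟫) := by
      have := hm.2 x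
      rwa [ContinuousLinearMap.reApplyInnerSelf_apply, RCLike.re_to_complex, hxm] at this
    have h3 : Complex.re ⟪P x, x⟫ = 0 := by nlinarith
    have h4 : (A + ε • P) x = 0 := by
      apply isPositive_apply_eq_zero hp
      rw [hxp, h3, mul_zero]
    have h5 : ε • P x = 0 := by
      rw [ContinuousLinearMap.add_apply, ContinuousLinearMap.smul_apply, hx, zero_add] at h4
      exact h4
    exact (smul_eq_zero.mp h5).resolve_left (ne_of_gt hε)
  exact range_le_range_of_ker_le_ker hA.isSelfAdjoint hP hker

end Helpers

section LmapLemmas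

variable {H : Type*} [NormedAddCommGroup H] [InnerProductSpace ℂ H]
  [FiniteDimensional ℂ H] {G : Type*} [Group G] [Fintype G] {I : Type*} [Fintype I]

lemma Lmap_add (U : G → (H →L[ℂ] H)) (A B : I → (H →L[ℂ] H)) :
    Lmap U (A + B) = Lmap U A + Lmap U B := by
  simp only [Lmap, Pi.add_apply, add_comp, comp_add, Finset.sum_add_distrib, smul_add]

lemma Lmap_smul (U : G → (H →L[ℂ] H)) (t : ℝ) (A : I → (H →L[ℂ] H)) :
    Lmap U (t • A) = t • Lmap U A := by
  have h : ∀ (B : H →L[ℂ] H), t • B = ((t : ℂ)) • B := fun B => by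
    rw [← algebraMap_smul ℂ t B, Complex.coe_algebraMap]
  simp only [Lmap, Pi.smul_apply, h, smul_comp, comp_smul, ← Finset.smul_sum]
  rw [smul_comm]

end LmapLemmas

/-- A family `P` of self-adjoint operators is a perturbation of `A ∈ 𝒞` if and only if
(a) the range of `P i` is contained in the range of `A i` for every `i`, and (b) `L(P) = 0`. -/
theorem isPerturbation_iff_range_le_and_Lmap_eq_zero
    {H : Type*} [NormedAddCommGroup H] [InnerProductSpace ℂ H] [FiniteDimensional ℂ H]
    [Nontrivial H]
    {G : Type*} [Group G] [Fintype G] {I : Type*} [Fintype I] [Nonempty I]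
    (U : G → (H →L[ℂ] H))
    (hU1 : ∀ g, U g ∘L ContinuousLinearMap.adjoint (U g) = 1)
    (hU2 : ∀ g, ContinuousLinearMap.adjoint (U g) ∘L U g = 1)
    (hUm : ∀ g h, U (g * h) = U g ∘L U h)
    (A P : I → (H →L[ℂ] H)) (hA : A ∈ covSet U) (hP : ∀ i, IsSelfAdjoint (P i)) :
    (∃ ε > (0 : ℝ), ∀ t ∈ Set.Icc (-ε) ε, A + t • P ∈ covSet U) ↔
      ((∀ i, LinearMap.range (P i : H →ₗ[ℂ] H) ≤ LinearMap.range (A i : H →ₗ[ℂ] H)) ∧ Lmap U P = 0) := by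
  obtain ⟨hApos, hAL⟩ := hA
  constructor
  · rintro ⟨ε, hε, h⟩
    have hpε := h ε ⟨by linarith, le_refl ε⟩
    have hmε := h (-ε) ⟨le_refl _, by linarith⟩
    constructor
    · intro i
      have h1 : (A i + ε • P i).IsPositive := hpε.1 i
      have h2 : (A i + (-ε) • P i).IsPositive := hmε.1 i
      exact range_le_of_isPositive_pair (hApos i) (hP i) hε h1 h2
    · have h1 : Lmap U (A + ε • P) = 1 := hpε.2
      rw [Lmap_add, Lmap_smul, hAL] at h1
      have h2 : ε • Lmap U P = 0 := by
        rwa [add_eq_left] at h1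
      have h3 := congrArg (fun X => ε⁻¹ • X) h2
      simpa [smul_smul, inv_mul_cancel₀ (ne_of_gt hε)] using h3
  · rintro ⟨hr, hLP⟩
    have hex : ∀ i, ∃ ε > (0 : ℝ), ∀ t : ℝ, |t| ≤ ε → (A i + t • P i).IsPositive :=
      fun i => exists_eps_isPositive (hApos i) (hP i) (hr i)
    choose ε hεpos hεP using hex
    set ε0 := Finset.univ.inf' Finset.univ_nonempty ε with hε0def
    have hε0 : 0 < ε0 := by
      rw [hε0def, Finset.lt_inf'_iff]
      exact fun i _ => hεpos i
    refine ⟨ε0, hε0, fun t ht => ⟨fun i => ?_, ?_⟩⟩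
    · have hti : |t| ≤ ε i := by
        have h1 : |t| ≤ ε0 := abs_le.mpr ⟨ht.1, ht.2⟩
        exact h1.trans (Finset.inf'_le _ (Finset.mem_univ i))
      exact hεP i t hti
    · rw [Lmap_add, Lmap_smul, hAL, hLP, smul_zero, add_zero]
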